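/- Let 1 ≤ s ≤ M−1 be an integer threshold. Define the transition matrix P_s on the state space {1,...,M} by: from each state i with 1 ≤ i < s the chain moves to i+1 with probability 1; from each state i with s ≤ i ≤ M−1 it moves to 1 with probability p and to i+1 with probability 1−p; from state M it moves to 1 with probability p and stays at M with probability 1−p. Define π by π_i = π₁ for 1 ≤ i ≤ s, π_i = π₁(1−p)^{i−s} for s < i ≤ M−1, and π_M = π₁(1−p)^{M−s}/p, where π₁ = (s + (1−p)/p)⁻¹. Then π is a stationary probability distribution of P_s: Σ_{i=1}^M π_i = 1 and Σ_{i=1}^M π_i P_s(i,j) = π_j for every j ∈ {1,...,M}. -/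

import Mathlib

open Finset

/-- Transition matrix of the threshold-`s` aging-control chain on states `{1,...,M}`:
below the threshold the age increases deterministically; at or above the threshold the
age resets to `1` with probability `p` and otherwise increases (capped at `M`). -/
noncomputable def Pmat (M s : ℕ) (p : ℝ) (i j : ℕ) : ℝ :=
  if i < s then (if j = i + 1 then 1 else 0)
  else if i < M then (if j = 1 then p else if j = i + 1 then 1 - p else 0)
  else (if j = 1 then p else if j = M then 1 - p else 0)

/-- Candidate stationary distribution of the threshold-`s` chain. -/
noncomputable def piDist (M s : ℕ) (p : ℝ) (i : ℕ) : ℝ :=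
  if i ≤ s then ((s : ℝ) + (1 - p) / p)⁻¹
  else if i ≤ M - 1 then ((s : ℝ) + (1 - p) / p)⁻¹ * (1 - p) ^ (i - s)
  else ((s : ℝ) + (1 - p) / p)⁻¹ * (1 - p) ^ (M - s) / p

/-- `piDist` is a stationary probability distribution of `Pmat`. -/
theorem piDist_stationary (M s : ℕ) (p : ℝ)
    (hM : 2 ≤ M) (hp : 0 < p) (hp1 : p < 1)
    (hs1 : 1 ≤ s) (hsM : s ≤ M - 1) :
    (∑ i ∈ Finset.Icc 1 M, piDist M s p i) = 1 ∧
    ∀ j ∈ Finset.Icc 1 M,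
      (∑ i ∈ Finset.Icc 1 M, piDist M s p i * Pmat M s p i j) = piDist M s p j := by
  obtain ⟨n, hMn⟩ : ∃ n, M = s + n + 1 := ⟨M - 1 - s, by omega⟩
  have hpne : p ≠ 0 := ne_of_gt hp
  have hqne1 : (1 - p : ℝ) ≠ 1 := by intro h; apply hpne; linarith
  have hX0 : (0:ℝ) < (s : ℝ) + (1 - p) / p := by
    have h1 : (1:ℝ) ≤ (s:ℝ) := by exact_mod_cast hs1
    have h2 : (0:ℝ) ≤ (1 - p) / p := div_nonneg (by linarith) (le_of_lt hp)
    linarith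
  have hXne : ((s : ℝ) + (1 - p) / p) ≠ 0 := ne_of_gt hX0
  -- piDist evaluations
  have hpi_le : ∀ i, i ≤ s → piDist M s p i = ((s : ℝ) + (1 - p) / p)⁻¹ := by
    intro i h; simp [piDist, h]
  have hpi_mid : ∀ i, s < i → i ≤ M - 1 →
      piDist M s p i = ((s : ℝ) + (1 - p) / p)⁻¹ * (1 - p) ^ (i - s) := by
    intro i h1 h2
    simp only [piDist, if_neg (by omega : ¬ i ≤ s), if_pos h2]
  have hpi_M : piDist M s p M = ((s : ℝ) + (1 - p) / p)⁻¹ * (1 - p) ^ (n + 1) / p := by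
    have e : M - s = n + 1 := by omega
    simp only [piDist, if_neg (by omega : ¬ M ≤ s), if_neg (by omega : ¬ M ≤ M - 1), e]
  have hpi_M1 : piDist M s p (M - 1) = ((s : ℝ) + (1 - p) / p)⁻¹ * (1 - p) ^ n := by
    rcases Nat.eq_zero_or_pos n with hn | hn
    · rw [hpi_le (M - 1) (by omega)]; simp [hn]
    · rw [hpi_mid (M - 1) (by omega) le_rfl, show M - 1 - s = n by omega]
  -- geometric middle sum
  have hgeo : (((1 - p : ℝ)) ^ n - 1) / ((1 - p) - 1) = (1 - (1 - p) ^ n) / p := by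
    rw [show (1 - p : ℝ) - 1 = -p by ring, div_neg, ← neg_div, neg_sub]
  have hmid : ∀ f : ℕ → ℝ,
      (∀ i, s + 1 ≤ i → i ≤ M - 1 → f i = ((s : ℝ) + (1 - p) / p)⁻¹ * (1 - p) ^ (i - s)) →
      ∑ i ∈ Icc (s + 1) (M - 1), f i
        = ((s : ℝ) + (1 - p) / p)⁻¹ * (1 - p) * ((1 - (1 - p) ^ n) / p) := by
    intro f hf
    have h1 : Icc (s + 1) (M - 1) = Ico (s + 1) (s + 1 + n) := by
      ext x; simp only [mem_Icc, mem_Ico]; omega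
    rw [h1, Finset.sum_Ico_eq_sum_range]
    have h2 : s + 1 + n - (s + 1) = n := by omega
    rw [h2]
    have h3 : ∀ k ∈ range n, f (s + 1 + k)
        = ((s : ℝ) + (1 - p) / p)⁻¹ * (1 - p) * (1 - p) ^ k := by
      intro k hk
      have hk' : k < n := mem_range.mp hk
      rw [hf (s + 1 + k) (by omega) (by omega), show s + 1 + k - s = k + 1 by omega, pow_succ]
      ring
    rw [Finset.sum_congr rfl h3, ← Finset.mul_sum, geom_sum_eq hqne1, hgeo]
  -- splitting lemma
  have hsplit : ∀ (f : ℕ → ℝ) (a : ℕ), a ≤ s → 1 ≤ a →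
      ∑ i ∈ Icc a M, f i = f a + (∑ i ∈ Icc (s + 1) (M - 1), f i)
        + (∑ i ∈ Icc (a + 1) s, f i) + f M := by
    intro f a ha ha1
    have e0 : Icc a M = Ioc (a - 1) M := by ext x; simp only [mem_Icc, mem_Ioc]; omega
    have e1 : (∑ i ∈ Ioc (a-1) a, f i) + (∑ i ∈ Ioc a M, f i) = ∑ i ∈ Ioc (a-1) M, f i :=
      Finset.sum_Ioc_consecutive f (by omega) (by omega)
    have e2 : (∑ i ∈ Ioc a s, f i) + (∑ i ∈ Ioc s M, f i) = ∑ i ∈ Ioc a M, f i :=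
      Finset.sum_Ioc_consecutive f (by omega) (by omega)
    have e3 : (∑ i ∈ Ioc s (M-1), f i) + (∑ i ∈ Ioc (M-1) M, f i) = ∑ i ∈ Ioc s M, f i :=
      Finset.sum_Ioc_consecutive f (by omega) (by omega)
    have s1 : Ioc (a-1) a = {a} := by ext x; simp only [mem_Ioc, mem_singleton]; omega
    have s2 : Ioc (M-1) M = {M} := by ext x; simp only [mem_Ioc, mem_singleton]; omega
    have s3 : Ioc a s = Icc (a+1) s := by ext x; simp only [mem_Ioc, mem_Icc]; omega
    have s4 : Ioc s (M-1) = Icc (s+1) (M-1) := by ext x; simp only [mem_Ioc, mem_Icc]; omega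
    rw [e0, ← e1, s1, Finset.sum_singleton, ← e2, ← e3, s2, s3, s4, Finset.sum_singleton]
    ring
  constructor
  · -- sum to one
    rw [hsplit (piDist M s p) 1 hs1 le_rfl]
    have hA : ∑ i ∈ Icc 2 s, piDist M s p i = ((s:ℝ) - 1) * ((s : ℝ) + (1 - p) / p)⁻¹ := by
      rw [Finset.sum_congr rfl (fun i hi => hpi_le i (mem_Icc.mp hi).2), Finset.sum_const,
        Nat.card_Icc, nsmul_eq_mul, show s + 1 - 2 = s - 1 by omega, Nat.cast_sub hs1,
        Nat.cast_one]
    rw [hA, hpi_le 1 hs1, hpi_M, hmid (piDist M s p) (fun i h1 h2 => hpi_mid i (by omega) h2)]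
    have inner : (1:ℝ) + (1 - p) * ((1 - (1 - p) ^ n) / p) + ((s:ℝ) - 1)
        + (1 - p) ^ (n + 1) / p = (s : ℝ) + (1 - p) / p := by
      field_simp [hpne]
      ring
    calc ((s : ℝ) + (1 - p) / p)⁻¹
          + ((s : ℝ) + (1 - p) / p)⁻¹ * (1 - p) * ((1 - (1 - p) ^ n) / p)
          + ((s:ℝ) - 1) * ((s : ℝ) + (1 - p) / p)⁻¹
          + ((s : ℝ) + (1 - p) / p)⁻¹ * (1 - p) ^ (n + 1) / p
        = ((s : ℝ) + (1 - p) / p)⁻¹ * ((1:ℝ) + (1 - p) * ((1 - (1 - p) ^ n) / p)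
            + ((s:ℝ) - 1) + (1 - p) ^ (n + 1) / p) := by ring
      _ = 1 := by rw [inner, inv_mul_cancel₀ hXne]
  · intro j hj
    rw [mem_Icc] at hj
    obtain ⟨hj1, hjM⟩ := hj
    rcases eq_or_lt_of_le hj1 with h1 | h1
    · -- j = 1
      subst h1
      have hP : ∀ i ∈ Icc 1 M, piDist M s p i * Pmat M s p i 1
          = if s ≤ i then piDist M s p i * p else 0 := by
        intro i hi
        rw [mem_Icc] at hi
        by_cases hs : s ≤ i
        · rw [if_pos hs]
          congr 1
          simp [Pmat, show ¬ i < s by omega]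
        · rw [if_neg hs]
          simp [Pmat, show i < s by omega, show (1:ℕ) ≠ i + 1 by omega, show i ≠ 0 by omega]
      rw [Finset.sum_congr rfl hP, ← Finset.sum_filter]
      have hfil : (Icc 1 M).filter (fun i => s ≤ i) = Icc s M := by
        ext x; simp only [mem_filter, mem_Icc]; omega
      rw [hfil, ← Finset.sum_mul, hsplit (piDist M s p) s le_rfl hs1,
        Finset.Icc_eq_empty (by omega : ¬ s + 1 ≤ s), Finset.sum_empty,
        hmid (piDist M s p) (fun i hA hB => hpi_mid i (by omega) hB),
        hpi_le s le_rfl, hpi_M, hpi_le 1 hs1]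
      have inner : ((1:ℝ) + (1 - p) * ((1 - (1 - p) ^ n) / p) + 0
          + (1 - p) ^ (n + 1) / p) * p = 1 := by
        field_simp
        ring
      calc (((s : ℝ) + (1 - p) / p)⁻¹
            + ((s : ℝ) + (1 - p) / p)⁻¹ * (1 - p) * ((1 - (1 - p) ^ n) / p)
            + 0 + ((s : ℝ) + (1 - p) / p)⁻¹ * (1 - p) ^ (n + 1) / p) * p
          = ((s : ℝ) + (1 - p) / p)⁻¹ * (((1:ℝ) + (1 - p) * ((1 - (1 - p) ^ n) / p) + 0
              + (1 - p) ^ (n + 1) / p) * p) := by ring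
        _ = ((s : ℝ) + (1 - p) / p)⁻¹ := by rw [inner, mul_one]
    · -- j ≥ 2
      rcases eq_or_lt_of_le hjM with hjeq | hjlt
      · -- j = M
        rw [hjeq]
        have hsub : ({M - 1, M} : Finset ℕ) ⊆ Icc 1 M := by
          intro x hx
          simp only [mem_insert, mem_singleton] at hx
          rw [mem_Icc]; omega
        have hz : ∀ i ∈ Icc 1 M, i ∉ ({M - 1, M} : Finset ℕ) →
            piDist M s p i * Pmat M s p i M = 0 := by
          intro i hi hni
          rw [mem_Icc] at hi
          simp only [mem_insert, mem_singleton] at hni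
          push_neg at hni
          simp [Pmat, show (M:ℕ) ≠ i + 1 by omega, show (M:ℕ) ≠ 1 by omega,
            show i < M by omega]
        rw [← Finset.sum_subset hsub hz, Finset.sum_pair (by omega : M - 1 ≠ M)]
        have hPm1 : Pmat M s p (M-1) M = 1 - p := by
          unfold Pmat
          rw [if_neg (show ¬ M - 1 < s by omega), if_pos (show M - 1 < M by omega),
            if_neg (show ¬ (M:ℕ) = 1 by omega), if_pos (show M = M - 1 + 1 by omega)]
        have hPm : Pmat M s p M M = 1 - p := by
          unfold Pmat
          rw [if_neg (show ¬ M < s by omega), if_neg (show ¬ M < M by omega),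
            if_neg (show ¬ (M:ℕ) = 1 by omega), if_pos rfl]
        rw [hPm1, hPm, hpi_M1, hpi_M]
        generalize ((s : ℝ) + (1 - p) / p)⁻¹ = C
        field_simp [hpne]
        ring
      · -- 2 ≤ j ≤ M - 1
        have key : ∑ i ∈ Icc 1 M, piDist M s p i * Pmat M s p i j
            = piDist M s p (j-1) * Pmat M s p (j-1) j := by
          apply Finset.sum_eq_single_of_mem
          · rw [mem_Icc]; omega
          · intro i hi hne
            rw [mem_Icc] at hi
            simp [Pmat, show j ≠ i + 1 by omega, show j ≠ 1 by omega, show j ≠ M by omega]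
        rw [key]
        by_cases hjs : j ≤ s
        · have hP1 : Pmat M s p (j-1) j = 1 := by
            unfold Pmat
            rw [if_pos (show j - 1 < s by omega), if_pos (show j = j - 1 + 1 by omega)]
          rw [hpi_le (j-1) (by omega), hpi_le j hjs, hP1, mul_one]
        · -- j ≥ s + 1
          have hPq : Pmat M s p (j-1) j = 1 - p := by
            unfold Pmat
            rw [if_neg (show ¬ j - 1 < s by omega), if_pos (show j - 1 < M by omega),
              if_neg (show ¬ (j:ℕ) = 1 by omega), if_pos (show j = j - 1 + 1 by omega)]
          rw [hPq, hpi_mid j (by omega) (by omega)]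
          by_cases hjs1 : j = s + 1
          · rw [hpi_le (j-1) (by omega), show j - s = 1 by omega, pow_one]
          · rw [hpi_mid (j-1) (by omega) (by omega),
              show j - s = (j - 1 - s) + 1 by omega, pow_succ]
            ring
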